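/- arXiv:1806.04737 — 2 statements merged into one kernel-verified Lean document; each statement's English description precedes it below -/
import Mathlib

section
/- Let B > 0 with B < 1 and let T' : (x₀, 1) → ℝ be given by T'(x) = (x − x₀)^{B−1} (1 + G(x)) where G is Hölder continuous with exponent αB on (x₀,1), G ≥ −1/2, and |G| ≤ 1/2. Then there exist ι ∈ (0, 1−B] and a constant C_h > 0 such that for all x, y ∈ (x₀,1): |T'(x) − T'(y)| ≤ C_h |T'(x)| |T'(y)| |x − y|^ι. -/
open Real

lemma sub_rpow_le' {p u v : ℝ} (hp0 : 0 ≤ p) (hp1 : p ≤ 1) (hu : 0 ≤ u) (huv : u ≤ v) :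
    v ^ p - u ^ p ≤ (v - u) ^ p := by
  have hvu : (0:ℝ) ≤ v - u := by linarith
  have h := NNReal.rpow_add_le_add_rpow ((v - u).toNNReal) (u.toNNReal) hp0 hp1
  have h2 := NNReal.coe_le_coe.2 h
  push_cast [NNReal.coe_rpow, Real.coe_toNNReal _ hvu, Real.coe_toNNReal _ hu] at h2
  have hvv : v - u + u = v := by ring
  rw [hvv] at h2
  linarith

lemma key_rpow (B : ℝ) (hB : 0 < B) (hB1 : B < 1) {u v : ℝ} (hu : 0 < u) (hv : 0 < v) :
    |u ^ (B-1) - v ^ (B-1)| ≤ u ^ (B-1) * v ^ (B-1) * |u - v| ^ (1-B) := by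
  wlog huv : u ≤ v with H
  · have h := H B hB hB1 hv hu (le_of_not_ge huv)
    rw [abs_sub_comm, abs_sub_comm u v]
    calc |v ^ (B-1) - u ^ (B-1)| ≤ v ^ (B-1) * u ^ (B-1) * |v - u| ^ (1-B) := h
      _ = u ^ (B-1) * v ^ (B-1) * |v - u| ^ (1-B) := by ring
  have hP : v ^ (B-1) ≤ u ^ (B-1) := Real.rpow_le_rpow_of_nonpos hu huv (by linarith)
  have hPu : (0:ℝ) < u ^ (B-1) := Real.rpow_pos_of_pos hu _
  have hPv : (0:ℝ) < v ^ (B-1) := Real.rpow_pos_of_pos hv _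
  rw [abs_of_nonneg (by linarith), abs_of_nonpos (by linarith), neg_sub]
  have sub : v ^ (1-B) - u ^ (1-B) ≤ (v - u) ^ (1-B) :=
    sub_rpow_le' (by linarith) (by linarith) hu.le huv
  have idu : u ^ (B-1) * u ^ (1-B) = 1 := by
    rw [← Real.rpow_add hu]; norm_num
  have idv : v ^ (B-1) * v ^ (1-B) = 1 := by
    rw [← Real.rpow_add hv]; norm_num
  have hid : u ^ (B-1) - v ^ (B-1) = u ^ (B-1) * v ^ (B-1) * (v ^ (1-B) - u ^ (1-B)) := by
    linear_combination (v ^ (B-1)) * idu - (u ^ (B-1)) * idv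
  rw [hid]
  exact mul_le_mul_of_nonneg_left sub (by positivity)

set_option maxHeartbeats 1000000

/-- Multiplicative Hölder inequality for the derivative of the Lorenz-like map near
its singular point: if `T'(x) = (x − x₀)^{B−1}(1 + G(x))` with `G` Hölder of exponent
`αB`, `G ≥ −1/2` and `|G| ≤ 1/2` on `(x₀, 1)`, then there are `ι ∈ (0, 1−B]` and
`C_h > 0` with `|T'(x) − T'(y)| ≤ C_h |T'(x)| |T'(y)| |x − y|^ι`. -/
theorem stmt10 (x₀ B α : ℝ) (hB : 0 < B) (hB1 : B < 1) (hx₀ : x₀ < 1) (hα : 0 < α)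
    (G T' : ℝ → ℝ) (CG : ℝ)
    (hG : ∀ x ∈ Set.Ioo x₀ 1, ∀ y ∈ Set.Ioo x₀ 1,
      |G x - G y| ≤ CG * |x - y| ^ (α * B))
    (hGlb : ∀ x ∈ Set.Ioo x₀ 1, -(1 / 2) ≤ G x)
    (hGub : ∀ x ∈ Set.Ioo x₀ 1, |G x| ≤ 1 / 2)
    (hT' : ∀ x ∈ Set.Ioo x₀ 1, T' x = (x - x₀) ^ (B - 1) * (1 + G x)) :
    ∃ ι ∈ Set.Ioc (0 : ℝ) (1 - B), ∃ Ch : ℝ, 0 < Ch ∧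
      ∀ x ∈ Set.Ioo x₀ 1, ∀ y ∈ Set.Ioo x₀ 1,
        |T' x - T' y| ≤ Ch * |T' x| * |T' y| * |x - y| ^ ι := by
  obtain ⟨ι, hιdef⟩ : ∃ i : ℝ, i = min (α * B) (1 - B) := ⟨_, rfl⟩
  have hι0 : 0 < ι := hιdef ▸ lt_min (by positivity) (by linarith)
  have hι1 : ι ≤ 1 - B := hιdef ▸ min_le_right _ _
  have hι2 : ι ≤ α * B := hιdef ▸ min_le_left _ _
  obtain ⟨D, hDdef⟩ : ∃ d : ℝ, d = 1 - x₀ := ⟨_, rfl⟩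
  have hD : 0 < D := by rw [hDdef]; linarith
  obtain ⟨Dm, hDmdef⟩ : ∃ d : ℝ, d = max D 1 := ⟨_, rfl⟩
  have hDm : 0 < Dm := hDmdef ▸ lt_of_lt_of_le one_pos (le_max_right _ _)
  have hDDm : D ≤ Dm := hDmdef ▸ le_max_left _ _
  -- CG is nonnegative
  have hCG : 0 ≤ CG := by
    have ha : x₀ + D/3 ∈ Set.Ioo x₀ 1 := ⟨by linarith, by rw [hDdef] at hD ⊢; linarith⟩
    have hb : x₀ + 2*D/3 ∈ Set.Ioo x₀ 1 := ⟨by linarith, by rw [hDdef] at hD ⊢; linarith⟩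
    have h := (abs_nonneg (G (x₀ + D/3) - G (x₀ + 2*D/3))).trans (hG _ ha _ hb)
    have habs : |x₀ + D/3 - (x₀ + 2*D/3)| = D/3 := by
      rw [abs_of_nonpos (by linarith)]; ring
    rw [habs] at h
    have hp : (0:ℝ) < (D/3) ^ (α * B) := Real.rpow_pos_of_pos (by linarith) _
    nlinarith
  obtain ⟨K, hKdef⟩ : ∃ k : ℝ,
      k = (3/2) * Dm ^ (1 - B - ι) + CG * D ^ (1 - B) * Dm ^ (α * B - ι) := ⟨_, rfl⟩
  have hK0 : 0 < K := by
    have h1 : (0:ℝ) < Dm ^ (1 - B - ι) := Real.rpow_pos_of_pos hDm _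
    have h2 : (0:ℝ) ≤ CG * D ^ (1 - B) * Dm ^ (α * B - ι) := by positivity
    rw [hKdef]; linarith
  refine ⟨ι, ⟨hι0, hι1⟩, 4 * K, by linarith, ?_⟩
  intro x hx y hy
  rcases eq_or_ne x y with rfl | hxy
  · simp only [sub_self, abs_zero]
    have h0 : (0:ℝ) ≤ (0:ℝ) ^ ι := Real.rpow_nonneg le_rfl _
    have h1 : (0:ℝ) ≤ 4 * K * |T' x| * |T' x| :=
      mul_nonneg (mul_nonneg (by linarith) (abs_nonneg _)) (abs_nonneg _)
    exact mul_nonneg h1 h0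
  -- basic positivity facts
  have hxu : 0 < x - x₀ := by linarith [hx.1]
  have hyu : 0 < y - x₀ := by linarith [hy.1]
  have hxD : x - x₀ ≤ D := by rw [hDdef]; linarith [hx.2]
  have hxyD : |x - y| ≤ Dm := by
    rw [hDmdef]
    refine le_trans (abs_le.2 ⟨?_, ?_⟩) (le_max_left _ _) <;> rw [hDdef] <;>
      [linarith [hx.1, hy.2]; linarith [hx.2, hy.1]]
  have hxypos : 0 < |x - y| := abs_pos.2 (sub_ne_zero.2 hxy)
  obtain ⟨P, hPdef⟩ : ∃ p : ℝ, p = (x - x₀) ^ (B - 1) := ⟨_, rfl⟩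
  obtain ⟨Q, hQdef⟩ : ∃ q : ℝ, q = (y - x₀) ^ (B - 1) := ⟨_, rfl⟩
  have hPpos : 0 < P := hPdef ▸ Real.rpow_pos_of_pos hxu _
  have hQpos : 0 < Q := hQdef ▸ Real.rpow_pos_of_pos hyu _
  obtain ⟨r, hrdef⟩ : ∃ s : ℝ, s = |x - y| ^ ι := ⟨_, rfl⟩
  have hrpos : 0 < r := hrdef ▸ Real.rpow_pos_of_pos hxypos _
  have hGx := abs_le.1 (hGub x hx)
  have hGy := abs_le.1 (hGub y hy)
  have hTx : T' x = P * (1 + G x) := by rw [hT' x hx, hPdef]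
  have hTy : T' y = Q * (1 + G y) := by rw [hT' y hy, hQdef]
  have hTxa : |T' x| = P * (1 + G x) := by
    rw [hTx, abs_of_nonneg (mul_nonneg hPpos.le (by linarith))]
  have hTya : |T' y| = Q * (1 + G y) := by
    rw [hTy, abs_of_nonneg (mul_nonneg hQpos.le (by linarith))]
  -- splitting of powers of |x - y|
  have split1 : |x - y| ^ (1 - B) = |x - y| ^ (1 - B - ι) * r := by
    rw [hrdef, ← Real.rpow_add hxypos]; ring_nf
  have split2 : |x - y| ^ (α * B) = |x - y| ^ (α * B - ι) * r := by
    rw [hrdef, ← Real.rpow_add hxypos]; ring_nf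
  have b1 : |x - y| ^ (1 - B - ι) ≤ Dm ^ (1 - B - ι) :=
    Real.rpow_le_rpow (abs_nonneg _) hxyD (by linarith)
  have b2 : |x - y| ^ (α * B - ι) ≤ Dm ^ (α * B - ι) :=
    Real.rpow_le_rpow (abs_nonneg _) hxyD (by linarith)
  have bu : (x - x₀) ^ (1 - B) ≤ D ^ (1 - B) :=
    Real.rpow_le_rpow hxu.le hxD (by linarith)
  have idP : P * (x - x₀) ^ (1 - B) = 1 := by
    rw [hPdef, ← Real.rpow_add hxu]; norm_num
  -- key estimate
  have key : |P - Q| ≤ P * Q * |x - y| ^ (1 - B) := by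
    have h := key_rpow B hB hB1 hxu hyu
    have hsub : (x - x₀) - (y - x₀) = x - y := by ring
    rw [hsub] at h
    rw [hPdef, hQdef]
    exact h
  -- decomposition
  have hdecomp : T' x - T' y = (P - Q) * (1 + G x) + Q * (G x - G y) := by
    rw [hTx, hTy]; ring
  have habs1 : |T' x - T' y| ≤ |P - Q| * (3/2) + Q * (CG * |x - y| ^ (α * B)) := by
    rw [hdecomp]
    refine (abs_add_le _ _).trans (add_le_add ?_ ?_)
    · rw [abs_mul]
      exact mul_le_mul_of_nonneg_left (abs_le.2 ⟨by linarith, by linarith⟩) (abs_nonneg _)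
    · rw [abs_mul, abs_of_pos hQpos]
      exact mul_le_mul_of_nonneg_left (hG x hx y hy) hQpos.le
  -- term 1
  have t1 : |P - Q| * (3/2) ≤ P * Q * ((3/2) * Dm ^ (1 - B - ι)) * r := by
    have h1 : |P - Q| ≤ P * Q * (Dm ^ (1 - B - ι) * r) := by
      refine key.trans ?_
      rw [split1]
      exact mul_le_mul_of_nonneg_left (mul_le_mul_of_nonneg_right b1 hrpos.le)
        (mul_nonneg hPpos.le hQpos.le)
    calc |P - Q| * (3/2) ≤ P * Q * (Dm ^ (1 - B - ι) * r) * (3/2) :=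
          mul_le_mul_of_nonneg_right h1 (by norm_num)
      _ = P * Q * ((3/2) * Dm ^ (1 - B - ι)) * r := by ring
  -- term 2
  have t2 : Q * (CG * |x - y| ^ (α * B)) ≤
      P * Q * (CG * D ^ (1 - B) * Dm ^ (α * B - ι)) * r := by
    have e : Q * (CG * |x - y| ^ (α * B)) =
        (P * Q * CG * r) * ((x - x₀) ^ (1 - B) * |x - y| ^ (α * B - ι)) := by
      rw [split2]
      linear_combination (-(Q * CG * r * |x - y| ^ (α * B - ι))) * idP
    rw [e]
    calc (P * Q * CG * r) * ((x - x₀) ^ (1 - B) * |x - y| ^ (α * B - ι))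
        ≤ (P * Q * CG * r) * (D ^ (1 - B) * Dm ^ (α * B - ι)) := by
          refine mul_le_mul_of_nonneg_left ?_ ?_
          · exact mul_le_mul bu b2 (Real.rpow_nonneg (abs_nonneg _) _)
              (Real.rpow_nonneg hD.le _)
          · exact mul_nonneg (mul_nonneg (mul_nonneg hPpos.le hQpos.le) hCG) hrpos.le
      _ = P * Q * (CG * D ^ (1 - B) * Dm ^ (α * B - ι)) * r := by ring
  -- combine
  have hxy14 : (1/4 : ℝ) ≤ (1 + G x) * (1 + G y) := by
    have h := mul_le_mul (show (1/2:ℝ) ≤ 1 + G x by linarith)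
      (show (1/2:ℝ) ≤ 1 + G y by linarith) (by norm_num) (by linarith)
    linarith
  have h4 : P * Q ≤ 4 * (|T' x| * |T' y|) := by
    rw [hTxa, hTya]
    calc P * Q = (4 * (P * Q)) * (1/4) := by ring
      _ ≤ (4 * (P * Q)) * ((1 + G x) * (1 + G y)) :=
          mul_le_mul_of_nonneg_left hxy14 (by positivity)
      _ = 4 * (P * (1 + G x) * (Q * (1 + G y))) := by ring
  calc |T' x - T' y| ≤ |P - Q| * (3/2) + Q * (CG * |x - y| ^ (α * B)) := habs1
    _ ≤ P * Q * ((3/2) * Dm ^ (1 - B - ι)) * r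
        + P * Q * (CG * D ^ (1 - B) * Dm ^ (α * B - ι)) * r := add_le_add t1 t2
    _ = (P * Q) * (K * r) := by rw [hKdef]; ring
    _ ≤ (4 * (|T' x| * |T' y|)) * (K * r) :=
        mul_le_mul_of_nonneg_right h4 (mul_nonneg hK0.le hrpos.le)
    _ = 4 * K * |T' x| * |T' y| * |x - y| ^ ι := by rw [hrdef]; ring
end

section
/- Let μ^ε and μ₀ be probability measures on a measurable space Z, t, t₀ : Z → [c, ∞) with c > 0, t ∈ L¹(μ^ε), t₀ ∈ L¹(μ₀). Suppose that for every ϵ > 0 there is M such that μ^ε[(t − t∧M)1_{t>M}] ≤ ϵ and μ₀[(t₀ − t₀∧M)1_{t₀>M}] ≤ ϵ. Then for every bounded measurable F : Z × [0,∞) → ℝ, writing E(F) := ∫ ∫₀^{t(x)} F(x,s) ds dμ^ε and E_M(F) := ∫ ∫₀^{t(x)∧M} F(x,s) ds dμ^ε, one has | E(F)/μ^ε(t) − E_M(F)/μ^ε(t∧M) | ≤ 2ϵ ‖F‖_∞ / (μ^ε(t) ∧ 1). -/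
open MeasureTheory

/-- Auxiliary: measurability of the parametrized interval integral with a measurable,
nonnegative upper endpoint. -/
lemma stmt14_aux_meas {Z : Type*} [MeasurableSpace Z] (F : Z × ℝ → ℝ) (hF : Measurable F)
    (h : Z → ℝ) (hh : Measurable h) (hh0 : ∀ x, 0 ≤ h x) :
    StronglyMeasurable (fun x => ∫ s in (0 : ℝ)..(h x), F (x, s)) := by
  have hset : MeasurableSet {p : Z × ℝ | 0 < p.2 ∧ p.2 ≤ h p.1} := by
    have h1 : MeasurableSet {p : Z × ℝ | 0 < p.2} :=
      measurableSet_lt measurable_const measurable_snd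
    have h2 : MeasurableSet {p : Z × ℝ | p.2 ≤ h p.1} :=
      measurableSet_le measurable_snd (hh.comp measurable_fst)
    exact h1.inter h2
  have key : ∀ x, (∫ s in (0 : ℝ)..(h x), F (x, s))
      = ∫ s, ({p : Z × ℝ | 0 < p.2 ∧ p.2 ≤ h p.1}.indicator F) (x, s) := by
    intro x
    calc (∫ s in (0:ℝ)..(h x), F (x, s))
        = ∫ s in Set.Ioc 0 (h x), F (x, s) := intervalIntegral.integral_of_le (hh0 x)
    _ = ∫ s, (Set.Ioc 0 (h x)).indicator (fun s => F (x, s)) s :=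
        (integral_indicator measurableSet_Ioc).symm
    _ = ∫ s, ({p : Z × ℝ | 0 < p.2 ∧ p.2 ≤ h p.1}.indicator F) (x, s) := by
        refine integral_congr_ae (Filter.Eventually.of_forall fun s => ?_)
        simp only [Set.indicator_apply, Set.mem_Ioc, Set.mem_setOf_eq]
  simp_rw [key]
  exact ((hF.indicator hset).stronglyMeasurable).integral_prod_right'

/-- Truncation estimate for normalized suspension functionals: if the tails of the
roof functions beyond level `M` have mass at most `ϵ`, then for every bounded
measurable `F`, `|E(F)/μ^ε(t) − E_M(F)/μ^ε(t∧M)| ≤ 2ϵ‖F‖_∞/(μ^ε(t) ∧ 1)`. -/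
theorem stmt14 {Z : Type*} [MeasurableSpace Z]
    (μe μ0 : Measure Z) [IsProbabilityMeasure μe] [IsProbabilityMeasure μ0]
    (t t0 : Z → ℝ) (c : ℝ) (hc : 0 < c)
    (hct : ∀ x, c ≤ t x) (hct0 : ∀ x, c ≤ t0 x)
    (ht : Integrable t μe) (ht0 : Integrable t0 μ0)
    (ϵ : ℝ) (hϵ : 0 < ϵ) (M : ℝ)
    (htail : ∫ x, (t x - min (t x) M) ∂μe ≤ ϵ)
    (htail0 : ∫ x, (t0 x - min (t0 x) M) ∂μ0 ≤ ϵ) :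
    ∀ (F : Z × ℝ → ℝ) (Fb : ℝ), Measurable F → (∀ p, |F p| ≤ Fb) →
      |(∫ x, (∫ s in (0 : ℝ)..(t x), F (x, s)) ∂μe) / (∫ x, t x ∂μe)
        - (∫ x, (∫ s in (0 : ℝ)..(min (t x) M), F (x, s)) ∂μe)
            / (∫ x, min (t x) M ∂μe)|
      ≤ 2 * ϵ * Fb / min (∫ x, t x ∂μe) 1 := by
  intro F Fb hF hFb
  -- Basic facts
  have hZ : Nonempty Z := μe.nonempty_of_neZero
  obtain ⟨x₀⟩ := hZ
  have hFb0 : 0 ≤ Fb := le_trans (abs_nonneg _) (hFb (x₀, 0))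
  set A := ∫ x, t x ∂μe with hA_def
  have hcA : c ≤ A := by
    calc c = ∫ _, c ∂μe := by simp
    _ ≤ A := integral_mono (integrable_const c) ht hct
  have hA : 0 < A := lt_of_lt_of_le hc hcA
  have hminA1 : 0 < min A 1 := lt_min hA one_pos
  have hminA1A : min A 1 ≤ A := min_le_left _ _
  -- integrability of min t M
  have htm : Integrable (fun x => min (t x) M) μe := ht.inf (integrable_const M)
  set B := ∫ x, min (t x) M ∂μe with hB_def
  have hBA : B ≤ A := integral_mono htm ht (fun x => min_le_left _ _)
  have hAB : A - B ≤ ϵ := by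
    have hsub := integral_sub ht htm
    rw [hsub] at htail
    linarith
  set g : Z → ℝ := fun x => ∫ s in (0 : ℝ)..(t x), F (x, s) with hg_def
  set gM : Z → ℝ := fun x => ∫ s in (0 : ℝ)..(min (t x) M), F (x, s) with hgM_def
  set E := ∫ x, g x ∂μe with hE_def
  set EM := ∫ x, gM x ∂μe with hEM_def
  -- pointwise bound on g
  have hgbd : ∀ x, ‖g x‖ ≤ Fb * t x := by
    intro x
    have := intervalIntegral.norm_integral_le_of_norm_le_const
      (a := 0) (b := t x) (C := Fb) (f := fun s => F (x, s))
      (fun s _ => by simpa using hFb (x, s))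
    simpa [abs_of_nonneg (le_trans hc.le (hct x))] using this
  have hE_bd : ‖E‖ ≤ Fb * A := by
    have : ‖E‖ ≤ ∫ x, Fb * t x ∂μe :=
      norm_integral_le_of_norm_le (ht.const_mul Fb) (Filter.Eventually.of_forall hgbd)
    rwa [integral_const_mul] at this
  rcases le_or_gt M 0 with hM0 | hM0
  · -- Degenerate case M ≤ 0 : bound each term by Fb.
    have hmin : ∀ x, min (t x) M = M :=
      fun x => min_eq_right (hM0.trans (hc.le.trans (hct x)))
    have hBM : B = M := by
      rw [hB_def]
      simp [hmin]
    have hϵA : A ≤ ϵ := by rw [hBM] at hAB; linarith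
    have hE_abs : |E / A| ≤ Fb := by
      rw [abs_div, abs_of_pos hA, div_le_iff₀ hA]
      simpa [Real.norm_eq_abs] using hE_bd
    have hEM_abs : |EM / B| ≤ Fb := by
      rcases eq_or_lt_of_le hM0 with hM | hM
      · have : B = 0 := by rw [hBM, ← hM]
        simp [this, hFb0]
      · have hgMbd : ∀ x, ‖gM x‖ ≤ Fb * (-M) := by
          intro x
          have := intervalIntegral.norm_integral_le_of_norm_le_const
            (a := 0) (b := min (t x) M) (C := Fb) (f := fun s => F (x, s))
            (fun s _ => by simpa using hFb (x, s))
          calc ‖gM x‖ ≤ Fb * |min (t x) M - 0| := by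
                simpa [Real.norm_eq_abs] using this
          _ = Fb * (-M) := by rw [sub_zero, hmin x, abs_of_neg hM]
        have hEM_bd : ‖EM‖ ≤ Fb * (-M) := by
          have : ‖EM‖ ≤ ∫ _, Fb * (-M) ∂μe :=
            norm_integral_le_of_norm_le (integrable_const _)
              (Filter.Eventually.of_forall hgMbd)
          simpa using this
        have hBneg : B < 0 := by rw [hBM]; exact hM
        rw [abs_div, abs_of_neg hBneg, div_le_iff₀ (by linarith : (0:ℝ) < -B)]
        rw [hBM]
        simpa [Real.norm_eq_abs] using hEM_bd
    have h2 : (1 : ℝ) ≤ ϵ / min A 1 :=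
      (one_le_div hminA1).2 (hminA1A.trans hϵA)
    have hfinal : |E / A - EM / B| ≤ 2 * Fb := by
      calc |E / A - EM / B| ≤ |E / A| + |EM / B| := abs_sub _ _
      _ ≤ Fb + Fb := add_le_add hE_abs hEM_abs
      _ = 2 * Fb := by ring
    calc |E / A - EM / B| ≤ 2 * Fb := hfinal
    _ ≤ 2 * ϵ * Fb / min A 1 := by
        rw [div_eq_mul_inv]
        nlinarith [mul_le_mul_of_nonneg_left h2 (by linarith : (0:ℝ) ≤ 2 * Fb),
          (div_eq_mul_inv ϵ (min A 1)) ▸ h2]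
  · -- Main case M > 0
    have hminpos : ∀ x, 0 < min (t x) M := fun x => lt_min (hc.trans_le (hct x)) hM0
    have hcB : min c M ≤ B := by
      calc min c M = ∫ _, min c M ∂μe := by simp
      _ ≤ B := integral_mono (integrable_const _) htm
          (fun x => min_le_min (hct x) le_rfl)
    have hB : 0 < B := lt_of_lt_of_le (lt_min hc hM0) hcB
    -- pointwise bound on gM
    have hgMbd : ∀ x, ‖gM x‖ ≤ Fb * min (t x) M := by
      intro x
      have := intervalIntegral.norm_integral_le_of_norm_le_const
        (a := 0) (b := min (t x) M) (C := Fb) (f := fun s => F (x, s))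
        (fun s _ => by simpa using hFb (x, s))
      simpa [abs_of_pos (hminpos x)] using this
    have hEM_bd : ‖EM‖ ≤ Fb * B := by
      have : ‖EM‖ ≤ ∫ x, Fb * min (t x) M ∂μe :=
        norm_integral_le_of_norm_le (htm.const_mul Fb)
          (Filter.Eventually.of_forall hgMbd)
      rwa [integral_const_mul] at this
    -- interval integrability of slices
    have hslice : ∀ (x : Z) (a b : ℝ), IntervalIntegrable (fun s => F (x, s)) volume a b := by
      intro x a b
      refine (intervalIntegrable_const (c := Fb)).mono_fun'
        ((hF.comp measurable_prodMk_left).aestronglyMeasurable) ?_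
      exact Filter.Eventually.of_forall fun s => by simpa using hFb (x, s)
    -- pointwise bound on g - gM
    have hdiff : ∀ x, ‖g x - gM x‖ ≤ Fb * (t x - min (t x) M) := by
      intro x
      have heq : g x - gM x = ∫ s in (min (t x) M)..(t x), F (x, s) :=
        intervalIntegral.integral_interval_sub_left (hslice x 0 (t x))
          (hslice x 0 (min (t x) M))
      rw [heq]
      have := intervalIntegral.norm_integral_le_of_norm_le_const
        (a := min (t x) M) (b := t x) (C := Fb) (f := fun s => F (x, s))
        (fun s _ => by simpa using hFb (x, s))
      have hnn : (0:ℝ) ≤ t x - min (t x) M := by simp [min_le_left]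
      simpa [abs_of_nonneg hnn] using this
    -- measurability and integrability of g, gM
    set τ : Z → ℝ := fun x => max (ht.1.mk t x) 0 with hτ_def
    have hτm : Measurable τ := ht.1.measurable_mk.max measurable_const
    have hτt : τ =ᵐ[μe] t := by
      filter_upwards [ht.1.ae_eq_mk] with x hx
      simp [hτ_def, ← hx, max_eq_left (le_trans hc.le (hct x))]
    have hg_aesm : AEStronglyMeasurable g μe := by
      refine AEStronglyMeasurable.congr
        ((stmt14_aux_meas F hF τ hτm (fun x => le_max_right _ _)).aestronglyMeasurable) ?_
      filter_upwards [hτt] with x hx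
      simp [hg_def, hx]
    have hgM_aesm : AEStronglyMeasurable gM μe := by
      have hτM : Measurable (fun x => min (τ x) M) := hτm.min measurable_const
      refine AEStronglyMeasurable.congr
        ((stmt14_aux_meas F hF _ hτM
          (fun x => le_min (le_max_right _ _) hM0.le)).aestronglyMeasurable) ?_
      filter_upwards [hτt] with x hx
      simp [hgM_def, hx]
    have hg_int : Integrable g μe :=
      Integrable.mono' (ht.const_mul Fb) hg_aesm (Filter.Eventually.of_forall hgbd)
    have hgM_int : Integrable gM μe :=
      Integrable.mono' (htm.const_mul Fb) hgM_aesm (Filter.Eventually.of_forall hgMbd)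
    -- bound on E - EM
    have hdiffE : ‖E - EM‖ ≤ Fb * (A - B) := by
      have hsub : E - EM = ∫ x, (g x - gM x) ∂μe := (integral_sub hg_int hgM_int).symm
      rw [hsub]
      have : ‖∫ x, (g x - gM x) ∂μe‖ ≤ ∫ x, Fb * (t x - min (t x) M) ∂μe :=
        norm_integral_le_of_norm_le ((ht.sub htm).const_mul Fb)
          (Filter.Eventually.of_forall hdiff)
      rwa [integral_const_mul, integral_sub ht htm] at this
    -- final algebra
    have key : E / A - EM / B = (E - EM) / A + EM * (B - A) / (A * B) := by
      field_simp
      ring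
    have habs1 : |E - EM| ≤ Fb * (A - B) := by simpa [Real.norm_eq_abs] using hdiffE
    have habs2 : |EM| ≤ Fb * B := by simpa [Real.norm_eq_abs] using hEM_bd
    calc |E / A - EM / B| ≤ |(E - EM) / A| + |EM * (B - A) / (A * B)| := by
          rw [key]; exact abs_add_le _ _
    _ = |E - EM| / A + |EM| * (A - B) / (A * B) := by
          rw [abs_div, abs_div, abs_of_pos hA, abs_mul, abs_of_pos (mul_pos hA hB),
            abs_sub_comm B A, abs_of_nonneg (sub_nonneg.2 hBA)]
    _ ≤ (Fb * (A - B)) / A + (Fb * B) * (A - B) / (A * B) := by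
          gcongr
    _ = 2 * Fb * (A - B) / A := by field_simp; ring
    _ ≤ 2 * ϵ * Fb / min A 1 := by
          apply div_le_div₀ (by positivity) ?_ hminA1 hminA1A
          nlinarith
end
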